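/- Let X be a Banach space and (aₙ*) a bounded sequence in X* with ca(aₙ*) > 0, and let Q be the set of weak*-cluster points of (aₙ*). If diam Q ≥ (1/6)·ca(aₙ*), then δ(aₙ*) ≥ (1/6)·ca(aₙ*). -/

import Mathlib

open Filter

/-- `ca(xₙ) = inf_m diam {xₙ : n ≥ m}` for a sequence in a metric space. -/
noncomputable def ca {Y : Type*} [PseudoMetricSpace Y] (x : ℕ → Y) : ℝ :=
  ⨅ m : ℕ, Metric.diam {y | ∃ n, m ≤ n ∧ y = x n}

/-- `δ(aₙ*) = sup_{x ∈ B_X} inf_m diam {aₙ*(x) : n ≥ m}` for a sequence of functionals,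
evaluated against the closed unit ball of the predual. -/
noncomputable def deltaPre {X : Type*} [NormedAddCommGroup X] [NormedSpace ℝ X]
    (a : ℕ → StrongDual ℝ X) : ℝ :=
  ⨆ x : {x : X // ‖x‖ ≤ 1}, ⨅ m : ℕ, Metric.diam {r : ℝ | ∃ n, m ≤ n ∧ r = a n x.1}

/-- `δ(yₙ) = sup_{‖f‖ ≤ 1} inf_m diam {f(yₙ) : n ≥ m}` for a sequence in a normed space,
the supremum being over functionals of norm at most `1`. -/
noncomputable def deltaDual {Y : Type*} [NormedAddCommGroup Y] [NormedSpace ℝ Y]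
    (y : ℕ → Y) : ℝ :=
  ⨆ f : {f : StrongDual ℝ Y // ‖f‖ ≤ 1},
    ⨅ m : ℕ, Metric.diam {r : ℝ | ∃ n, m ≤ n ∧ r = f.1 (y n)}

/-- The set of weak*-cluster points of a sequence of functionals. -/
def wkStarClusterPts {X : Type*} [NormedAddCommGroup X] [NormedSpace ℝ X]
    (a : ℕ → StrongDual ℝ X) : Set (StrongDual ℝ X) :=
  {g | MapClusterPt (StrongDual.toWeakDual g) atTop
    (fun n => StrongDual.toWeakDual (a n))}
/-- If `(aₙ*)` is a bounded sequence in `X*` with `ca(aₙ*) > 0` whose set `Q` of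
weak*-cluster points satisfies `diam Q ≥ (1/6)·ca(aₙ*)`, then `δ(aₙ*) ≥ (1/6)·ca(aₙ*)`. -/
theorem stmt16 {X : Type} [NormedAddCommGroup X] [NormedSpace ℝ X] [CompleteSpace X]
    (a : ℕ → StrongDual ℝ X) (hbdd : ∃ K : ℝ, ∀ n, ‖a n‖ ≤ K)
    (hca : 0 < ca a)
    (hQ : (1 / 6 : ℝ) * ca a ≤ Metric.diam (wkStarClusterPts a)) :
    (1 / 6 : ℝ) * ca a ≤ deltaPre a := by
  obtain ⟨K, hK⟩ := hbdd
  have hK0 : (0:ℝ) ≤ K := (norm_nonneg _).trans (hK 0)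
  set c := (1/6 : ℝ) * ca a with hc
  have hsub : ∀ (x : X), ‖x‖ ≤ 1 → ∀ m : ℕ,
      {r : ℝ | ∃ n, m ≤ n ∧ r = a n x} ⊆ Metric.closedBall 0 K := by
    rintro x hx m r ⟨n, hn, rfl⟩
    simp only [Metric.mem_closedBall, dist_zero_right]
    calc ‖a n x‖ ≤ ‖a n‖ * ‖x‖ := (a n).le_opNorm x
      _ ≤ K * 1 := mul_le_mul (hK n) hx (norm_nonneg x) hK0
      _ = K := mul_one K
  have hdiam : ∀ x : X, ‖x‖ ≤ 1 → ∀ m : ℕ,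
      Metric.diam {r : ℝ | ∃ n, m ≤ n ∧ r = a n x} ≤ 2*K := by
    intro x hx m
    refine le_trans (Metric.diam_mono (hsub x hx m) Metric.isBounded_closedBall) ?_
    exact Metric.diam_closedBall hK0
  have hbdd' : BddAbove (Set.range fun x : {x : X // ‖x‖ ≤ 1} =>
      ⨅ m : ℕ, Metric.diam {r : ℝ | ∃ n, m ≤ n ∧ r = a n x.1}) := by
    refine ⟨2*K, ?_⟩
    rintro _ ⟨x, rfl⟩
    exact le_trans (ciInf_le ⟨0, by rintro r ⟨m, rfl⟩; exact Metric.diam_nonneg⟩ 0)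
      (hdiam x.1 x.2 0)
  refine le_of_forall_pos_le_add fun ε hε => ?_
  by_cases hcε : c - ε/2 < 0
  · have h0 : (0:ℝ) ≤ deltaPre a := by
      refine le_trans ?_ (le_ciSup hbdd' ⟨0, by simp⟩)
      exact le_ciInf fun m => Metric.diam_nonneg
    linarith
  push_neg at hcε
  have hQne : ∃ g ∈ wkStarClusterPts a, ∃ h ∈ wkStarClusterPts a, c - ε/2 < dist g h := by
    by_contra hcon
    push_neg at hcon
    have := Metric.diam_le_of_forall_dist_le hcε hcon
    linarith [hQ]
  obtain ⟨g, hg, h, hh, hgh⟩ := hQne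
  rw [dist_eq_norm] at hgh
  obtain ⟨x, hx1, hx2⟩ := (g - h).exists_lt_apply_of_lt_opNorm hgh
  have key : ∀ p : StrongDual ℝ X, p ∈ wkStarClusterPts a → ∀ m : ℕ,
      p x ∈ closure {r : ℝ | ∃ n, m ≤ n ∧ r = a n x} := by
    intro p hp m
    have hcp : MapClusterPt (p x) atTop (fun n => a n x) :=
      (hp : MapClusterPt _ atTop _).continuousAt_comp
        (f := fun φ : WeakDual ℝ X => φ x) (WeakDual.eval_continuous x).continuousAt
    rw [mem_closure_iff_clusterPt]
    refine ClusterPt.mono hcp ?_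
    exact le_principal_iff.2 (mem_map.2 (eventually_atTop.2 ⟨m, fun n hn => ⟨n, hn, rfl⟩⟩))
  have hxle : ∀ m : ℕ, c - ε/2 ≤ Metric.diam {r : ℝ | ∃ n, m ≤ n ∧ r = a n x} := by
    intro m
    have hb : Bornology.IsBounded {r : ℝ | ∃ n, m ≤ n ∧ r = a n x} :=
      Metric.isBounded_closedBall.subset (hsub x hx1.le m)
    calc c - ε/2 ≤ ‖(g - h) x‖ := hx2.le
      _ = dist (g x) (h x) := by
          simp [dist_eq_norm]
      _ ≤ Metric.diam (closure {r : ℝ | ∃ n, m ≤ n ∧ r = a n x}) :=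
          Metric.dist_le_diam_of_mem hb.closure (key g hg m) (key h hh m)
      _ = _ := Metric.diam_closure _
  have hfin : c - ε/2 ≤ deltaPre a :=
    le_trans (le_ciInf hxle) (le_ciSup hbdd' ⟨x, hx1.le⟩)
  linarith
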